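/- Let C = (C, ⊗, I) be a monoidal category admitting an initial object 0 and a coproduct I + I, both preserved by each functor A ⊗ (−), and suppose 0 and I + I admit right duals. Then the object 0 is terminal, and the unit object I carries a counital comagma structure: there exist morphisms δ : I → I + I and ε : I → 0 such that composing δ with the map I + I → I whose first component is I → 0 → I (via ε followed by the unique map out of 0) and whose second component is the identity yields 1_I, and symmetrically with the two components exchanged. -/

import Mathlib

open CategoryTheory CategoryTheory.Limits CategoryTheory.MonoidalCategory

universe v u

/-- `Y` is a right dual of `X`, witnessed by `η : 𝟙_ C ⟶ Y ⊗ X`, when every morphism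
`f : A ⟶ B ⊗ X` factors as `(g ▷ X) ∘ (A ◁ η)` (modulo unitor and associator) for a
unique `g : A ⊗ Y ⟶ B`. -/
def IsRightDual {C : Type u} [Category.{v} C] [MonoidalCategory C]
    (X Y : C) (η : 𝟙_ C ⟶ Y ⊗ X) : Prop :=
  ∀ (A B : C) (f : A ⟶ B ⊗ X), ∃! g : A ⊗ Y ⟶ B,
    f = (ρ_ A).inv ≫ (A ◁ η) ≫ (α_ A Y X).inv ≫ (g ▷ X)

/-- `Y` is a left dual of `X`, witnessed by `η : 𝟙_ C ⟶ X ⊗ Y`, when every morphism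
`f : A ⟶ X ⊗ B` factors as `(X ◁ g) ∘ (η ▷ A)` (modulo unitor and associator) for a
unique `g : Y ⊗ A ⟶ B`. -/
def IsLeftDual {C : Type u} [Category.{v} C] [MonoidalCategory C]
    (X Y : C) (η : 𝟙_ C ⟶ X ⊗ Y) : Prop :=
  ∀ (A B : C) (f : A ⟶ X ⊗ B), ∃! g : Y ⊗ A ⟶ B,
    f = (λ_ A).inv ≫ (η ▷ A) ≫ (α_ X Y A).hom ≫ (X ◁ g)

/-- Let `C` be a monoidal category with an initial object `O` and a coproduct
`J = 𝟙_C + 𝟙_C` of the unit with itself, both preserved by each functor `A ⊗ (−)`, and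
suppose `O` and `J` admit right duals.  Then `O` is terminal, and the unit object carries
a counital comagma structure: there are `δ : 𝟙_C ⟶ J` and `ε : 𝟙_C ⟶ O` such that
composing `δ` with the map `J ⟶ 𝟙_C` whose first (resp. second) component is `ε` followed
by the unique map out of `O` and whose other component is the identity yields the
identity. -/
theorem isTerminal_and_comagma_of_rightDuals {C : Type u} [Category.{v} C]
    [MonoidalCategory C]
    (O : C) (hO : IsInitial O)
    (J : C) (j₁ j₂ : 𝟙_ C ⟶ J) (hJ : IsColimit (BinaryCofan.mk j₁ j₂))
    (hpO : ∀ A : C, IsInitial (A ⊗ O))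
    (hpJ : ∀ A : C, IsColimit (BinaryCofan.mk (A ◁ j₁) (A ◁ j₂)))
    (hdO : ∃ (Y : C) (η : 𝟙_ C ⟶ Y ⊗ O), IsRightDual O Y η)
    (hdJ : ∃ (D : C) (η : 𝟙_ C ⟶ D ⊗ J), IsRightDual J D η) :
    Nonempty (IsTerminal O) ∧
      ∃ (δ : 𝟙_ C ⟶ J) (ε : 𝟙_ C ⟶ O),
        δ ≫ hJ.desc (BinaryCofan.mk (ε ≫ hO.to (𝟙_ C)) (𝟙 (𝟙_ C))) = 𝟙 (𝟙_ C) ∧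
        δ ≫ hJ.desc (BinaryCofan.mk (𝟙 (𝟙_ C)) (ε ≫ hO.to (𝟙_ C))) = 𝟙 (𝟙_ C) := by
  obtain ⟨Y, ηO, hY⟩ := hdO
  obtain ⟨D, ηJ, hD⟩ := hdJ
  -- O is terminal
  have hT : IsTerminal O := by
    refine IsTerminal.ofUniqueHom
      (fun A => (ρ_ A).inv ≫ (A ◁ ηO) ≫ (α_ A Y O).inv ≫ ((hpO (A ⊗ Y)).to O)) ?_
    intro A m
    obtain ⟨g, hg, -⟩ := hY A (𝟙_ C) (m ≫ (λ_ O).inv)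
    obtain ⟨g', hg', -⟩ := hY A (𝟙_ C)
      (((ρ_ A).inv ≫ (A ◁ ηO) ≫ (α_ A Y O).inv ≫ ((hpO (A ⊗ Y)).to O)) ≫ (λ_ O).inv)
    have hgg : g ▷ O = g' ▷ O := (hpO (A ⊗ Y)).hom_ext _ _
    rw [← cancel_mono (λ_ O).inv, hg, hg', hgg]
  set ε : 𝟙_ C ⟶ O := hT.from (𝟙_ C) with hε
  obtain ⟨g₁, hg₁, -⟩ := hD (𝟙_ C) (𝟙_ C) (j₁ ≫ (λ_ J).inv)
  obtain ⟨g₂, hg₂, -⟩ := hD (𝟙_ C) (𝟙_ C) (j₂ ≫ (λ_ J).inv)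
  set c₁ : D ⊗ 𝟙_ C ⟶ J := (ρ_ D).hom ≫ (λ_ D).inv ≫ g₁ ≫ j₁ with hc₁
  set c₂ : D ⊗ 𝟙_ C ⟶ J := (ρ_ D).hom ≫ (λ_ D).inv ≫ g₂ ≫ j₂ with hc₂
  set m : D ⊗ J ⟶ J := (hpJ D).desc (BinaryCofan.mk c₁ c₂) with hm
  have mfac₁ : (D ◁ j₁) ≫ m = c₁ := by
    exact (hpJ D).fac (BinaryCofan.mk c₁ c₂) ⟨WalkingPair.left⟩
  have mfac₂ : (D ◁ j₂) ≫ m = c₂ := by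
    exact (hpJ D).fac (BinaryCofan.mk c₁ c₂) ⟨WalkingPair.right⟩
  -- a general component computation
  have comp : ∀ (g : 𝟙_ C ⊗ D ⟶ 𝟙_ C) (k : 𝟙_ C ⟶ J) {Z : C} (q : J ⟶ Z),
      (D ◁ k) ≫ ((λ_ D).inv ▷ J) ≫ (g ▷ J) ≫ (λ_ J).hom ≫ q
        = (ρ_ D).hom ≫ (λ_ D).inv ≫ g ≫ k ≫ q := by
    intro g k Z q
    rw [whisker_exchange_assoc, whisker_exchange_assoc, leftUnitor_naturality_assoc,
      unitors_equal, rightUnitor_naturality_assoc, rightUnitor_naturality_assoc]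
  -- ηJ interacts with whiskering
  have claim : ηJ ≫ ((λ_ D).inv ▷ J)
      = (ρ_ (𝟙_ C)).inv ≫ (𝟙_ C ◁ ηJ) ≫ (α_ (𝟙_ C) D J).inv := by
    rw [← unitors_inv_equal, ← leftUnitor_inv_naturality_assoc, leftUnitor_tensor_inv]
    simp only [Category.assoc, Iso.hom_inv_id, Iso.hom_inv_id_assoc, Category.comp_id]
  refine ⟨⟨hT⟩, ηJ ≫ m, ε, ?_, ?_⟩
  · set p : J ⟶ 𝟙_ C := hJ.desc (BinaryCofan.mk (ε ≫ hO.to (𝟙_ C)) (𝟙 (𝟙_ C))) with hp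
    have fac₁ : j₁ ≫ p = ε ≫ hO.to (𝟙_ C) := by
      exact hJ.fac (BinaryCofan.mk (ε ≫ hO.to (𝟙_ C)) (𝟙 (𝟙_ C))) ⟨WalkingPair.left⟩
    have fac₂ : j₂ ≫ p = 𝟙 _ := by
      exact hJ.fac (BinaryCofan.mk (ε ≫ hO.to (𝟙_ C)) (𝟙 (𝟙_ C))) ⟨WalkingPair.right⟩
    have key : m ≫ p = ((λ_ D).inv ▷ J) ≫ (g₂ ▷ J) ≫ (λ_ J).hom ≫ p := by
      refine (hpJ D).hom_ext ?_
      rintro ⟨⟨⟩⟩ <;>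
        simp only [BinaryCofan.mk_pt, pair_obj_left, BinaryCofan.ι_app_left,
          BinaryCofan.ι_app_right, pair_obj_right, BinaryCofan.mk_inl, BinaryCofan.mk_inr] <;>
        rw [← Category.assoc]
      · change D ◁ j₁ ≫ m ≫ p = D ◁ j₁ ≫ ((λ_ D).inv ▷ J ≫ g₂ ▷ J) ≫ (λ_ J).hom ≫ p
        rw [← Category.assoc (D ◁ j₁) m p, mfac₁, hc₁, Category.assoc ((λ_ D).inv ▷ J), comp g₂ j₁ p]
        simp only [Category.assoc]
        rw [fac₁]
        have h12 : g₁ ≫ ε = g₂ ≫ ε := hT.hom_ext _ _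
        rw [show g₁ ≫ ε ≫ hO.to (𝟙_ C) = g₂ ≫ ε ≫ hO.to (𝟙_ C) from by
          rw [← Category.assoc, ← Category.assoc, h12]]
      · change D ◁ j₂ ≫ m ≫ p = D ◁ j₂ ≫ ((λ_ D).inv ▷ J ≫ g₂ ▷ J) ≫ (λ_ J).hom ≫ p
        rw [← Category.assoc (D ◁ j₂) m p, mfac₂, hc₂, Category.assoc ((λ_ D).inv ▷ J), comp g₂ j₂ p]
        simp only [Category.assoc]
    change (ηJ ≫ m) ≫ p = 𝟙 (𝟙_ C)
    rw [Category.assoc, key, reassoc_of% claim, ← reassoc_of% hg₂]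
    simp only [Iso.inv_hom_id_assoc]
    exact fac₂
  · set p : J ⟶ 𝟙_ C := hJ.desc (BinaryCofan.mk (𝟙 (𝟙_ C)) (ε ≫ hO.to (𝟙_ C))) with hp
    have fac₁ : j₁ ≫ p = 𝟙 _ := by
      exact hJ.fac (BinaryCofan.mk (𝟙 (𝟙_ C)) (ε ≫ hO.to (𝟙_ C))) ⟨WalkingPair.left⟩
    have fac₂ : j₂ ≫ p = ε ≫ hO.to (𝟙_ C) := by
      exact hJ.fac (BinaryCofan.mk (𝟙 (𝟙_ C)) (ε ≫ hO.to (𝟙_ C))) ⟨WalkingPair.right⟩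
    have key : m ≫ p = ((λ_ D).inv ▷ J) ≫ (g₁ ▷ J) ≫ (λ_ J).hom ≫ p := by
      refine (hpJ D).hom_ext ?_
      rintro ⟨⟨⟩⟩ <;>
        simp only [BinaryCofan.mk_pt, pair_obj_left, BinaryCofan.ι_app_left,
          BinaryCofan.ι_app_right, pair_obj_right, BinaryCofan.mk_inl, BinaryCofan.mk_inr] <;>
        rw [← Category.assoc]
      · change D ◁ j₁ ≫ m ≫ p = D ◁ j₁ ≫ ((λ_ D).inv ▷ J ≫ g₁ ▷ J) ≫ (λ_ J).hom ≫ p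
        rw [← Category.assoc (D ◁ j₁) m p, mfac₁, hc₁, Category.assoc ((λ_ D).inv ▷ J), comp g₁ j₁ p]
        simp only [Category.assoc]
      · change D ◁ j₂ ≫ m ≫ p = D ◁ j₂ ≫ ((λ_ D).inv ▷ J ≫ g₁ ▷ J) ≫ (λ_ J).hom ≫ p
        rw [← Category.assoc (D ◁ j₂) m p, mfac₂, hc₂, Category.assoc ((λ_ D).inv ▷ J), comp g₁ j₂ p]
        simp only [Category.assoc]
        rw [fac₂]
        have h12 : g₂ ≫ ε = g₁ ≫ ε := hT.hom_ext _ _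
        rw [show g₂ ≫ ε ≫ hO.to (𝟙_ C) = g₁ ≫ ε ≫ hO.to (𝟙_ C) from by
          rw [← Category.assoc, ← Category.assoc, h12]]
    change (ηJ ≫ m) ≫ p = 𝟙 (𝟙_ C)
    rw [Category.assoc, key, reassoc_of% claim, ← reassoc_of% hg₁]
    simp only [Iso.inv_hom_id_assoc]
    exact fac₁
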